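/- arXiv:2110.09089 — 2 statements merged into one kernel-verified Lean document; each statement's English description precedes it below -/
import Mathlib

section
/- Fix a, b ∈ ℤ/4ℤ, R = R_{a+bw}, n ≥ 1, a positive integer k, vectors x₁, …, x_k ∈ Rⁿ and scalars a₁, …, a_k ∈ R. Then Φ⁻¹((Φ(Σ_{i=1}^{k} aᵢxᵢ))^R) = Σ_{i=1}^{k} aᵢ · Φ⁻¹((Φ(xᵢ))^R); equivalently, Φ⁻¹((Φ(x))^R) = 3·x^r for every x ∈ Rⁿ and the map x ↦ 3·x^r on Rⁿ is R-linear. -/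
open Polynomial

/-- The base ring ℤ/4ℤ. -/
abbrev Z4 := ZMod 4

/-- The polynomial X² − (a + bX) over ℤ/4ℤ. -/
noncomputable def wPoly (a b : Z4) : Z4[X] := X ^ 2 - (C b * X + C a)

/-- The ring R_{a+bw} = (ℤ/4ℤ)[X]/(X² − (a + bX)); every element is uniquely
x₀ + x₁·w with x₀, x₁ ∈ ℤ/4ℤ, and w² = a + b·w. -/
abbrev Rw (a b : Z4) : Type := AdjoinRoot (wPoly a b)

/-- The element w of R_{a+bw}. -/
noncomputable def ww (a b : Z4) : Rw a b := AdjoinRoot.root _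

instance (a b : Z4) : Nonempty (Rw a b) := ⟨0⟩

/-- The Gau map expressed on coordinates:  ψ(x₀, x₁) is the DNA pair (in Fin 4 × Fin 4,
with A,G,C,T encoded as 0,1,2,3) assigned to the ring element x₀ + x₁·w. -/
def psi (p : Z4 × Z4) : Fin 4 × Fin 4 :=
  match p.1.val, p.2.val with
  | 0, 0 => (3, 3)
  | 1, 0 => (0, 1)
  | 2, 0 => (2, 2)
  | 3, 0 => (1, 0)
  | 0, 1 => (0, 2)
  | 1, 1 => (0, 3)
  | 2, 1 => (1, 3)
  | 3, 1 => (1, 2)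
  | 0, 2 => (1, 1)
  | 1, 2 => (2, 3)
  | 2, 2 => (0, 0)
  | 3, 2 => (3, 2)
  | 0, 3 => (2, 0)
  | 1, 3 => (2, 1)
  | 2, 3 => (3, 1)
  | _, _ => (3, 0)

/-- `phi` is a Gau map on R_{a+bw}: on the element x₀ + x₁·w it takes the value
prescribed by the table ψ. -/
def IsGauMap (a b : Z4) (phi : Rw a b → Fin 4 × Fin 4) : Prop :=
  ∀ x₀ x₁ : Z4,
    phi (algebraMap Z4 (Rw a b) x₀ + algebraMap Z4 (Rw a b) x₁ * ww a b) = psi (x₀, x₁)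

/-- Coordinatewise extension Φ of a Gau map φ to vectors. -/
def PhiV (a b : Z4) (phi : Rw a b → Fin 4 × Fin 4) (n : ℕ) (x : Fin n → Rw a b) :
    Fin n → Fin 4 × Fin 4 :=
  fun j => phi (x j)

/-- Inverse Φ⁻¹ of the coordinatewise extension of a Gau map. -/
noncomputable def PhiVinv (a b : Z4) (phi : Rw a b → Fin 4 × Fin 4) (n : ℕ)
    (y : Fin n → Fin 4 × Fin 4) : Fin n → Rw a b :=
  fun j => Function.invFun phi (y j)

/-- DNA-string reversal y ↦ y^R on Σⁿ: read the length-2n DNA string backwards,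
i.e. reverse the order of the pairs and swap the two entries of each pair. -/
def dnaRev (n : ℕ) (y : Fin n → Fin 4 × Fin 4) : Fin n → Fin 4 × Fin 4 :=
  fun j => ((y j.rev).2, (y j.rev).1)

/-- Watson–Crick complement y ↦ y^C on Σⁿ. -/
def dnaCompl (n : ℕ) (y : Fin n → Fin 4 × Fin 4) : Fin n → Fin 4 × Fin 4 :=
  fun j => (3 - (y j).1, 3 - (y j).2)

/-- Vector reversal g ↦ g^r on Rⁿ. -/
def vecRev {α : Type*} (n : ℕ) (x : Fin n → α) : Fin n → α :=
  fun j => x j.rev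

section Aux

instance : Nontrivial Z4 := ⟨0, 1, by decide⟩

variable (a b : Z4)

lemma deg_lin_lt : (Polynomial.C b * Polynomial.X + Polynomial.C a).degree < 2 :=
  lt_of_le_of_lt Polynomial.degree_linear_le (by exact_mod_cast one_lt_two)

lemma wPoly_monic : (wPoly a b).Monic :=
  Polynomial.monic_X_pow_sub (deg_lin_lt a b)

lemma wPoly_degree : (wPoly a b).degree = 2 := by
  have h : ((Polynomial.X : Z4[X]) ^ 2).degree = 2 := by
    rw [Polynomial.degree_X_pow]; rfl
  rw [wPoly, Polynomial.degree_sub_eq_left_of_degree_lt (by rw [h]; exact deg_lin_lt a b), h]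

/-- representation map -/
noncomputable def repw (p : Z4 × Z4) : Rw a b :=
  algebraMap Z4 (Rw a b) p.1 + algebraMap Z4 (Rw a b) p.2 * ww a b

lemma repw_eq_mk (p : Z4 × Z4) :
    repw a b p = AdjoinRoot.mk (wPoly a b) (Polynomial.C p.2 * Polynomial.X + Polynomial.C p.1) := by
  rw [repw, ww, AdjoinRoot.algebraMap_eq, map_add, map_mul, AdjoinRoot.mk_X,
    AdjoinRoot.mk_C, AdjoinRoot.mk_C]
  ring

lemma repw_injective : Function.Injective (repw a b) := by
  intro p q h
  rw [repw_eq_mk, repw_eq_mk, ← sub_eq_zero, ← map_sub, AdjoinRoot.mk_eq_zero] at h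
  set r : Polynomial Z4 := (Polynomial.C p.2 * Polynomial.X + Polynomial.C p.1) -
      (Polynomial.C q.2 * Polynomial.X + Polynomial.C q.1) with hr
  have hdr : r.degree < (wPoly a b).degree := by
    rw [wPoly_degree, hr]
    exact lt_of_le_of_lt (Polynomial.degree_sub_le _ _)
      (max_lt (deg_lin_lt _ _) (deg_lin_lt _ _))
  have hr0 : r = 0 := by
    by_contra h0
    exact (wPoly_monic a b).not_dvd_of_degree_lt h0 hdr h
  have h1 : Polynomial.C (p.2 - q.2) * Polynomial.X + Polynomial.C (p.1 - q.1) = 0 := by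
    rw [map_sub, map_sub, ← hr0, hr]; ring
  have h2 := congrArg (fun f => Polynomial.coeff f 0) h1
  have h3 := congrArg (fun f => Polynomial.coeff f 1) h1
  simp at h2 h3
  exact Prod.ext (sub_eq_zero.mp h2) (sub_eq_zero.mp h3)

lemma repw_surjective : Function.Surjective (repw a b) := by
  intro z
  obtain ⟨g, rfl⟩ := AdjoinRoot.mk_surjective z
  refine ⟨((g %ₘ wPoly a b).coeff 0, (g %ₘ wPoly a b).coeff 1), ?_⟩
  have hdeg : (g %ₘ wPoly a b).degree ≤ 1 := by
    have := Polynomial.degree_modByMonic_lt g (wPoly_monic a b)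
    rw [wPoly_degree] at this
    exact Order.le_of_lt_succ (by exact_mod_cast this)
  rw [repw_eq_mk]
  rw [← Polynomial.eq_X_add_C_of_degree_le_one hdeg]
  conv_rhs => rw [← Polynomial.modByMonic_add_div g (wPoly a b)]
  rw [map_add, map_mul, AdjoinRoot.mk_self, zero_mul, add_zero]

lemma psi_swap : ∀ p : Z4 × Z4, ((psi p).2, (psi p).1) = psi (3 * p.1, 3 * p.2) := by
  decide

lemma psi_injective : Function.Injective psi := by decide

variable {phi : Rw a b → Fin 4 × Fin 4} (hphi : IsGauMap a b phi)

include hphi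

lemma phi_repw (p : Z4 × Z4) : phi (repw a b p) = psi p := hphi p.1 p.2

lemma phi_injective : Function.Injective phi := by
  intro z1 z2 h
  obtain ⟨p, rfl⟩ := repw_surjective a b z1
  obtain ⟨q, rfl⟩ := repw_surjective a b z2
  rw [phi_repw a b hphi, phi_repw a b hphi] at h
  exact congrArg _ (psi_injective h)

lemma key_single (z : Rw a b) :
    Function.invFun phi ((phi z).2, (phi z).1) = 3 * z := by
  obtain ⟨p, rfl⟩ := repw_surjective a b z
  rw [phi_repw a b hphi, psi_swap, ← phi_repw a b hphi]
  rw [Function.leftInverse_invFun (phi_injective a b hphi)]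
  simp only [repw, map_mul, map_ofNat]
  ring

end Aux

/-- Φ⁻¹((Φ(Σᵢ aᵢxᵢ))^R) = Σᵢ aᵢ·Φ⁻¹((Φ(xᵢ))^R); equivalently,
Φ⁻¹((Φ(x))^R) = 3·x^r for every x ∈ Rⁿ, and the map x ↦ 3·x^r on Rⁿ is R-linear. -/

theorem gauMap_rev_linear (a b : Z4) (n k : ℕ) (hn : 1 ≤ n) (hk : 1 ≤ k)
    (phi : Rw a b → Fin 4 × Fin 4) (hphi : IsGauMap a b phi)
    (x : Fin k → Fin n → Rw a b) (c : Fin k → Rw a b) :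
    PhiVinv a b phi n (dnaRev n (PhiV a b phi n (∑ i, c i • x i))) =
      ∑ i, c i • PhiVinv a b phi n (dnaRev n (PhiV a b phi n (x i))) ∧
    (∀ z : Fin n → Rw a b,
      PhiVinv a b phi n (dnaRev n (PhiV a b phi n z)) = (3 : Rw a b) • vecRev n z) ∧
    IsLinearMap (Rw a b) (fun z : Fin n → Rw a b => (3 : Rw a b) • vecRev n z) := by
  have hkey : ∀ z : Fin n → Rw a b,
      PhiVinv a b phi n (dnaRev n (PhiV a b phi n z)) = (3 : Rw a b) • vecRev n z := by
    intro z; funext j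
    simp only [PhiVinv, dnaRev, PhiV, Pi.smul_apply, vecRev, smul_eq_mul]
    exact key_single a b hphi (z j.rev)
  refine ⟨?_, hkey, ?_⟩
  · rw [hkey]
    simp only [hkey]
    funext j
    simp [vecRev, Finset.sum_apply, Finset.mul_sum, mul_left_comm]
  · constructor
    · intro p q; funext j; simp [vecRev, mul_add]
    · intro r p; funext j
      simp only [vecRev, Pi.smul_apply, smul_eq_mul]
      ring
end

section
/- Let a, b ∈ {1, 3} ⊆ ℤ/4ℤ and R = R_{a+bw}, and let n ≥ 1. If C ⊆ Rⁿ is a self-dual linear code (C = C^⊥), then the all-2 vector (2, 2, …, 2) belongs to C; consequently the all-2w vector and the all-(2+2w) vector also belong to C. -/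
open Polynomial

lemma deg_lt_aux (a b : Z4) : (-(C b * X + C a)).degree < (X ^ 2 : Z4[X]).degree := by
  rw [degree_neg, degree_X_pow]
  apply lt_of_le_of_lt (degree_add_le _ _)
  rw [max_lt_iff]
  constructor
  · calc (C b * X).degree ≤ (C b).degree + X.degree := degree_mul_le _ _
      _ ≤ 0 + 1 := add_le_add degree_C_le degree_X_le
      _ < 2 := by norm_num
  · exact lt_of_le_of_lt degree_C_le (by norm_num)

lemma monic_wPoly (a b : Z4) : (wPoly a b).Monic := by
  unfold wPoly
  rw [sub_eq_add_neg]
  exact (monic_X_pow 2).add_of_left (deg_lt_aux a b)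

lemma degree_wPoly (a b : Z4) : (wPoly a b).degree = 2 := by
  unfold wPoly
  rw [sub_eq_add_neg, degree_add_eq_left_of_degree_lt (deg_lt_aux a b), degree_X_pow]
  rfl

/-- The canonical map ℤ/4ℤ → R_{a+bw}. -/
noncomputable def ov (a b : Z4) : Z4 →+* Rw a b := AdjoinRoot.of _

lemma ov_eq (a b x : Z4) : ov a b x = AdjoinRoot.mk (wPoly a b) (C x) := rfl

lemma hw (a b : Z4) : ww a b ^ 2 = ov a b a + ov a b b * ww a b := by
  have h := AdjoinRoot.eval₂_root (wPoly a b)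
  unfold ww ov
  unfold wPoly at h ⊢
  simp only [eval₂_sub, eval₂_pow, eval₂_X, eval₂_add, eval₂_mul, eval₂_C] at h
  have h2 := sub_eq_zero.mp h
  exact h2.trans (add_comm _ _)

lemma rep_exists (a b : Z4) (r : Rw a b) :
    ∃ u v : Z4, r = ov a b u + ov a b v * ww a b := by
  obtain ⟨p, rfl⟩ := AdjoinRoot.mk_surjective r
  set q := p %ₘ wPoly a b with hq
  refine ⟨q.coeff 0, q.coeff 1, ?_⟩
  have h1 : AdjoinRoot.mk (wPoly a b) p = AdjoinRoot.mk (wPoly a b) q := by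
    rw [hq, Polynomial.modByMonic_eq_sub_mul_div p (wPoly a b)]
    simp
  have hdeg : q.degree ≤ 1 := by
    have := degree_modByMonic_lt p (monic_wPoly a b)
    rw [degree_wPoly] at this
    exact Order.le_of_lt_succ (by exact_mod_cast this)
  have h2 := eq_X_add_C_of_degree_le_one hdeg
  rw [h1]
  conv_lhs => rw [h2]
  rw [ov_eq, ov_eq, map_add, map_mul, AdjoinRoot.mk_X]
  unfold ww
  ring

lemma rep_inj (a b : Z4) (u v : Z4) (h : ov a b u + ov a b v * ww a b = 0) :
    u = 0 ∧ v = 0 := by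
  have h1 : AdjoinRoot.mk (wPoly a b) (C u + C v * X) = 0 := by
    rw [map_add, map_mul, AdjoinRoot.mk_X]
    exact h
  rw [AdjoinRoot.mk_eq_zero] at h1
  obtain ⟨t, ht⟩ := h1
  have hp : C u + C v * X = 0 := by
    by_contra hne
    have ht0 : t ≠ 0 := by rintro rfl; simp at ht; exact hne ht
    have h2 : (2 : WithBot ℕ) ≤ (C u + C v * X).degree := by
      rw [ht, mul_comm, (monic_wPoly a b).degree_mul, degree_wPoly]
      have h0 : (0 : WithBot ℕ) ≤ t.degree := zero_le_degree_iff.mpr ht0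
      calc (2 : WithBot ℕ) = 0 + 2 := by norm_num
        _ ≤ t.degree + 2 := add_le_add h0 le_rfl
    have hle : (C u + C v * X).degree ≤ 1 := by
      apply le_trans (degree_add_le _ _)
      rw [max_le_iff]
      exact ⟨le_trans degree_C_le (by norm_num),
        le_trans (degree_mul_le _ _) (le_trans (add_le_add degree_C_le degree_X_le) (by norm_num))⟩
    exact absurd (le_trans h2 hle) (by decide)
  constructor
  · have := congrArg (fun s => Polynomial.coeff s 0) hp; simpa using this
  · have := congrArg (fun s => Polynomial.coeff s 1) hp; simpa using this

lemma z4key : ∀ a b : Z4, (a = 1 ∨ a = 3) → (b = 1 ∨ b = 3) → ∀ u v z0 z1 : Z4,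
    u ^ 2 + a * v ^ 2 - 2 * z0 = 0 → 2 * u * v + b * v ^ 2 - 2 * z1 = 0 →
    2 * u = 0 ∧ 2 * v = 0 := by decide

lemma sum_sq_aux {R : Type*} [CommRing R] {ι : Type*} (s : Finset ι) (y : ι → R) :
    ∃ z, (∑ i ∈ s, y i) ^ 2 = ∑ i ∈ s, (y i) ^ 2 + 2 * z := by
  classical
  induction s using Finset.induction_on with
  | empty => exact ⟨0, by simp⟩
  | @insert j s hj ih =>
    obtain ⟨z, hz⟩ := ih
    exact ⟨z + y j * ∑ i ∈ s, y i, by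
      rw [Finset.sum_insert hj, Finset.sum_insert hj, add_sq, hz]; ring⟩

/-- for a, b ∈ {1,3} ⊆ ℤ/4ℤ, every self-dual linear code C ⊆ Rⁿ contains
the all-2 vector; consequently it also contains the all-2w and all-(2+2w) vectors. -/
theorem self_dual_contains_all_two (a b : Z4) (ha : a = 1 ∨ a = 3) (hb : b = 1 ∨ b = 3)
    (n : ℕ) (hn : 1 ≤ n) (C : Submodule (Rw a b) (Fin n → Rw a b))
    (hsd : ∀ x : Fin n → Rw a b, x ∈ C ↔ ∀ y ∈ C, ∑ i, x i * y i = 0) :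
    (fun _ : Fin n => (2 : Rw a b)) ∈ C ∧
    (fun _ : Fin n => 2 * ww a b) ∈ C ∧
    (fun _ : Fin n => 2 + 2 * ww a b) ∈ C := by
  have key : ∀ y : Fin n → Rw a b, y ∈ C → 2 * ∑ i, y i = 0 := by
    intro y hy
    have hT : ∑ i, (y i) ^ 2 = 0 := by
      have := (hsd y).mp hy y hy
      simpa [sq] using this
    obtain ⟨z, hz⟩ := sum_sq_aux Finset.univ y
    rw [hT, zero_add] at hz
    obtain ⟨u, v, hS⟩ := rep_exists a b (∑ i, y i)
    obtain ⟨z0, z1, hZ⟩ := rep_exists a b z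
    have hexp : ov a b (u ^ 2 + a * v ^ 2 - 2 * z0)
        + ov a b (2 * u * v + b * v ^ 2 - 2 * z1) * ww a b = 0 := by
      have e1 := hw a b
      rw [hS, hZ] at hz
      simp only [map_sub, map_add, map_mul, map_pow, map_ofNat]
      linear_combination hz - (ov a b v) ^ 2 * e1
    obtain ⟨e1, e2⟩ := rep_inj a b _ _ hexp
    obtain ⟨hu, hv⟩ := z4key a b ha hb u v z0 z1 e1 e2
    rw [hS]
    calc 2 * (ov a b u + ov a b v * ww a b)
        = ov a b (2 * u) + ov a b (2 * v) * ww a b := by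
          simp only [map_mul, map_ofNat]; ring
      _ = 0 := by rw [hu, hv]; simp
  have m1 : (fun _ : Fin n => (2 : Rw a b)) ∈ C := by
    rw [hsd]
    intro y hy
    have : ∑ i, (2 : Rw a b) * y i = 2 * ∑ i, y i := by rw [Finset.mul_sum]
    rw [this, key y hy]
  refine ⟨m1, ?_, ?_⟩
  · rw [hsd]
    intro y hy
    have : ∑ i, (2 * ww a b) * y i = ww a b * (2 * ∑ i, y i) := by
      calc ∑ i, (2 * ww a b) * y i = ∑ i, ww a b * (2 * y i) :=
            Finset.sum_congr rfl (fun i _ => by ring)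
        _ = ww a b * (2 * ∑ i, y i) := by rw [Finset.mul_sum, Finset.mul_sum]
    rw [this, key y hy, mul_zero]
  · rw [hsd]
    intro y hy
    have : ∑ i, (2 + 2 * ww a b) * y i = (1 + ww a b) * (2 * ∑ i, y i) := by
      calc ∑ i, (2 + 2 * ww a b) * y i = ∑ i, (1 + ww a b) * (2 * y i) :=
            Finset.sum_congr rfl (fun i _ => by ring)
        _ = (1 + ww a b) * (2 * ∑ i, y i) := by rw [Finset.mul_sum, Finset.mul_sum]
    rw [this, key y hy, mul_zero]
end
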